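/- Let N and r be positive integers, let B_1, …, B_r be points of ℝ^N with rational coordinates, let L be the convex hull of {B_1, …, B_r}, let m be a positive integer, and let c > 0 be a real number. Let T be a set of linear functionals ℓ : ℝ^N → ℝ such that for every ℓ ∈ T and every j one has ℓ(B_j) ∈ (1/m)ℤ and ℓ(B_j) ≥ −c. Then there exists a finite subset T' ⊆ T such that { Δ ∈ L : ℓ(Δ) ≥ 0 for all ℓ ∈ T } = { Δ ∈ L : ℓ(Δ) ≥ 0 for all ℓ ∈ T' }. -/

import Mathlib

/-- Finite basis property for partially well-ordered sets (Dickson-type). -/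
lemma isPWO_exists_finite_basis {α : Type*} [PartialOrder α] {V : Set α} (h : V.IsPWO) :
    ∃ V₀ ⊆ V, V₀.Finite ∧ ∀ v ∈ V, ∃ u ∈ V₀, u ≤ v := by
  classical
  set M : Set α := {v ∈ V | ∀ u ∈ V, ¬ u < v} with hM
  have hMsub : M ⊆ V := fun v hv => hv.1
  have hanti : IsAntichain (· ≤ ·) M := by
    intro a ha b hb hab hle
    exact hb.2 a (hMsub ha) (lt_of_le_of_ne hle hab)
  refine ⟨M, hMsub, hanti.finite_of_partiallyWellOrderedOn (h.mono hMsub), ?_⟩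
  intro v hv
  set S : Set α := {u ∈ V | u ≤ v} with hS
  have hSwf : S.IsWF := h.isWF.mono (fun u hu => hu.1)
  have hSne : S.Nonempty := ⟨v, hv, le_refl v⟩
  refine ⟨hSwf.min hSne, ⟨(hSwf.min_mem hSne).1, ?_⟩, (hSwf.min_mem hSne).2⟩
  intro u hu hlt
  exact hSwf.not_lt_min hSne ⟨hu, hlt.le.trans (hSwf.min_mem hSne).2⟩ hlt

/-- Given rational points `B₁, …, B_r ∈ ℝ^N` with convex hull `L`, a positive
integer `m`, a real `c > 0`, and a set `T` of linear functionals with `ℓ (B j) ∈ (1/m)ℤ`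
and `ℓ (B j) ≥ -c` for all `ℓ ∈ T` and all `j`, there is a finite subset `T' ⊆ T` with
`{Δ ∈ L | ∀ ℓ ∈ T, ℓ Δ ≥ 0} = {Δ ∈ L | ∀ ℓ ∈ T', ℓ Δ ≥ 0}`. -/
theorem stmt_4 (N r : ℕ) (hN : 0 < N) (hr : 0 < r)
    (B : Fin r → EuclideanSpace ℝ (Fin N))
    (hB : ∀ j i, ∃ q : ℚ, B j i = (q : ℝ))
    (m : ℕ) (hm : 0 < m) (c : ℝ) (hc : 0 < c)
    (T : Set (EuclideanSpace ℝ (Fin N) →ₗ[ℝ] ℝ))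
    (hT : ∀ ℓ ∈ T, ∀ j, (∃ n : ℤ, ℓ (B j) = (n : ℝ) / m) ∧ -c ≤ ℓ (B j)) :
    ∃ T' ⊆ T, T'.Finite ∧
      {Δ ∈ convexHull ℝ (Set.range B) | ∀ ℓ ∈ T, 0 ≤ ℓ Δ}
        = {Δ ∈ convexHull ℝ (Set.range B) | ∀ ℓ ∈ T', 0 ≤ ℓ Δ} := by
  classical
  have hm' : (0:ℝ) < (m:ℝ) := by exact_mod_cast hm
  set K : ℤ := ⌈(m:ℝ) * c⌉ with hK
  set F : (EuclideanSpace ℝ (Fin N) →ₗ[ℝ] ℝ) → (Fin r → ℕ) :=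
    fun ℓ j => (⌈(m:ℝ) * ℓ (B j)⌉ + K).toNat with hF
  -- value reconstruction on T
  have hval : ∀ ℓ ∈ T, ∀ j, ℓ (B j) = (((F ℓ j : ℤ) : ℝ) - (K:ℝ)) / m := by
    intro ℓ hℓ j
    obtain ⟨⟨n, hn⟩, hge⟩ := hT ℓ hℓ j
    have hmul : (m:ℝ) * ℓ (B j) = (n:ℝ) := by
      rw [hn]; field_simp
    have hceil : ⌈(m:ℝ) * ℓ (B j)⌉ = n := by rw [hmul, Int.ceil_intCast]
    have hnK : 0 ≤ n + K := by
      have h1 : -((m:ℝ) * c) ≤ (n:ℝ) := by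
        rw [← hmul]
        nlinarith [mul_le_mul_of_nonneg_left hge (le_of_lt hm')]
      have h2 : ((-K : ℤ) : ℝ) ≤ (n:ℝ) := by
        refine le_trans ?_ h1
        push_cast
        simp only [neg_le_neg_iff]
        exact Int.le_ceil _
      have h3 : (-K : ℤ) ≤ n := by exact_mod_cast h2
      linarith
    have hFval : (F ℓ j : ℤ) = n + K := by
      simp only [hF, hceil]
      exact Int.toNat_of_nonneg hnK
    rw [hFval, hn]
    push_cast
    ring
  -- monotonicity on the convex hull
  have hmono : ∀ ℓ ∈ T, ∀ ℓ' ∈ T, F ℓ' ≤ F ℓ →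
      ∀ Δ ∈ convexHull ℝ (Set.range B), ℓ' Δ ≤ ℓ Δ := by
    intro ℓ hℓ ℓ' hℓ' hle Δ hΔ
    have hsub : convexHull ℝ (Set.range B) ⊆ {x | 0 ≤ (ℓ - ℓ') x} := by
      apply convexHull_min
      · rintro x ⟨j, rfl⟩
        have h1 : ℓ' (B j) ≤ ℓ (B j) := by
          rw [hval ℓ hℓ j, hval ℓ' hℓ' j]
          have hc' : ((F ℓ' j : ℤ) : ℝ) ≤ ((F ℓ j : ℤ) : ℝ) := by
            exact_mod_cast Nat.cast_le.mpr (hle j)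
          gcongr
        simp only [Set.mem_setOf_eq, LinearMap.sub_apply, sub_nonneg]
        exact h1
      · exact convex_halfSpace_ge (ℓ - ℓ').isLinear 0
    have := hsub hΔ
    simp only [Set.mem_setOf_eq, LinearMap.sub_apply, sub_nonneg] at this
    exact this
  -- Dickson's lemma
  set V : Set (Fin r → ℕ) := F '' T with hV
  have instW : ∀ _ : Fin r, IsWellOrder ℕ (· < ·) := fun _ => inferInstance
  have hPWO : V.IsPWO :=
    Set.isPWO_of_wellQuasiOrderedLE V
  obtain ⟨V₀, hV₀sub, hV₀fin, hV₀dom⟩ := isPWO_exists_finite_basis hPWO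
  have hchoice : ∀ u : Fin r → ℕ, ∃ ℓ, u ∈ V₀ → (ℓ ∈ T ∧ F ℓ = u) := by
    intro u
    by_cases hu : u ∈ V₀
    · obtain ⟨ℓ, hℓT, hℓu⟩ := hV₀sub hu
      exact ⟨ℓ, fun _ => ⟨hℓT, hℓu⟩⟩
    · exact ⟨0, fun h => absurd h hu⟩
  choose g hg using hchoice
  refine ⟨g '' V₀, ?_, hV₀fin.image g, ?_⟩
  · rintro ℓ ⟨u, hu, rfl⟩
    exact (hg u hu).1
  · ext Δ
    simp only [Set.mem_setOf_eq]
    constructor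
    · rintro ⟨hΔ, hpos⟩
      refine ⟨hΔ, fun ℓ' hℓ' => ?_⟩
      obtain ⟨u, hu, rfl⟩ := hℓ'
      exact hpos _ (hg u hu).1
    · rintro ⟨hΔ, hpos⟩
      refine ⟨hΔ, fun ℓ hℓ => ?_⟩
      obtain ⟨u₀, hu₀, hle⟩ := hV₀dom (F ℓ) ⟨ℓ, hℓ, rfl⟩
      have hgT := (hg u₀ hu₀).1
      have hgF := (hg u₀ hu₀).2
      have h1 : 0 ≤ g u₀ Δ := hpos (g u₀) ⟨u₀, hu₀, rfl⟩
      have h2 : g u₀ Δ ≤ ℓ Δ := hmono ℓ hℓ (g u₀) hgT (by rw [hgF]; exact hle) Δ hΔ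
      linarith
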